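/- For every connected block graph G (a graph in which every 2-connected block is a clique), χ_gp(G) = ⌈(diam(G)+1)/2⌉. -/

import Mathlib

open SimpleGraph

/-- A set `S` is in general position: no shortest path contains more than two vertices of `S`. -/
def IsGenPosSet {V : Type*} (G : SimpleGraph V) (S : Set V) : Prop :=
  ∀ ⦃u v : V⦄ (p : G.Walk u v), p.IsPath → p.length = G.dist u v →
    ∀ x y z, x ∈ S → y ∈ S → z ∈ S →
      x ∈ p.support → y ∈ p.support → z ∈ p.support →
      x = y ∨ y = z ∨ x = z

/-- `G` can be coloured with `k` colours so that every colour class is in general position. -/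
def GpColorable {V : Type*} (G : SimpleGraph V) (k : ℕ) : Prop :=
  ∃ c : V → Fin k, ∀ i, IsGenPosSet G {v | c v = i}

/-- The gp-chromatic number: least number of colours in a colouring whose classes are
general position sets. -/
noncomputable def gpChromatic {V : Type*} (G : SimpleGraph V) : ℕ :=
  sInf {k | GpColorable G k}

namespace GpAux

variable {V : Type*} {G : SimpleGraph V}

/-- distance from a vertex to a set -/
noncomputable def sdist (G : SimpleGraph V) (R : Set V) (x : V) : ℕ :=
  sInf {n | ∃ r ∈ R, G.dist x r = n}

lemma sdist_le {R : Set V} {x r : V} (hr : r ∈ R) : sdist G R x ≤ G.dist x r :=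
  Nat.sInf_le ⟨r, hr, rfl⟩

lemma sdist_exists {R : Set V} (hR : R.Nonempty) (x : V) :
    ∃ r ∈ R, G.dist x r = sdist G R x := by
  obtain ⟨r, hr⟩ := hR
  exact Nat.sInf_mem (⟨_, r, hr, rfl⟩ : {n | ∃ r ∈ R, G.dist x r = n}.Nonempty)

lemma adj_dist_one (hG : G.Connected) {a b : V} (hab : G.Adj a b) : G.dist a b = 1 := by
  have h1 : G.dist a b ≤ 1 := by
    have := dist_le (Walk.cons hab Walk.nil)
    simpa using this
  have h2 : 0 < G.dist a b := hG.pos_dist_of_ne hab.ne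
  omega

lemma sdist_lip (hG : G.Connected) {R : Set V} (hR : R.Nonempty) {a b : V} (hab : G.Adj a b) :
    sdist G R a ≤ sdist G R b + 1 := by
  obtain ⟨r, hr, hd⟩ := sdist_exists (G := G) hR b
  have : G.dist a r ≤ G.dist a b + G.dist b r := hG.dist_triangle
  have h1 : sdist G R a ≤ G.dist a r := sdist_le hr
  have h2 : G.dist a b = 1 := adj_dist_one hG hab
  omega

lemma geodesic_split (hG : G.Connected) {x y w : V} (p : G.Walk x y)
    (hp : p.length = G.dist x y) (hw : w ∈ p.support) :
    G.dist x w + G.dist w y = G.dist x y := by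
  classical
  have hspec := p.take_spec hw
  have hlen : (p.takeUntil w hw).length + (p.dropUntil w hw).length = p.length := by
    rw [← Walk.length_append, hspec]
  have h1 : G.dist x w ≤ (p.takeUntil w hw).length := dist_le _
  have h2 : G.dist w y ≤ (p.dropUntil w hw).length := dist_le _
  have h3 : G.dist x y ≤ G.dist x w + G.dist w y := hG.dist_triangle
  omega

lemma exists_prefix_meet {a b : V} (p : G.Walk a b) (S : Set V) (hb : b ∈ S) :
    ∃ (c : V) (p1 : G.Walk a c) (p2 : G.Walk c b),
      p1.append p2 = p ∧ c ∈ S ∧ ∀ v ∈ p1.support, v ≠ c → v ∉ S := by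
  classical
  induction p with
  | nil =>
    refine ⟨_, Walk.nil, Walk.nil, rfl, hb, ?_⟩
    intro v hv hvc
    simp only [Walk.support_nil, List.mem_singleton] at hv
    exact absurd hv hvc
  | @cons u u' b h q ih =>
    by_cases hu : u ∈ S
    · refine ⟨u, Walk.nil, Walk.cons h q, rfl, hu, ?_⟩
      intro v hv hvc
      simp only [Walk.support_nil, List.mem_singleton] at hv
      exact absurd hv hvc
    · obtain ⟨c, q1, q2, heq, hc, hmeet⟩ := ih hb
      refine ⟨c, Walk.cons h q1, q2, by rw [Walk.cons_append, heq], hc, ?_⟩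
      intro v hv hvc
      rcases List.mem_cons.mp (by simpa using hv) with h1 | h1
      · subst h1; exact hu
      · exact hmeet v h1 hvc

/-- Unimodal shape of a sequence that is 1-Lipschitz and satisfies the no-plateau-peak
condition: strictly decreasing (slope −1) up to `s0`, slope +1 after `s0`. -/
lemma shape (F : ℕ → ℕ) (L : ℕ)
    (hdown : ∀ t, t < L → F t ≤ F (t + 1) + 1)
    (hup : ∀ t, t < L → F (t + 1) ≤ F t + 1)
    (hX : ∀ t, t + 2 ≤ L → F t ≤ F (t + 1) → F (t + 1) + 1 ≤ F (t + 2)) :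
    ∃ s0 ≤ L, (∀ t ≤ s0, F t + t = F 0) ∧
      (∀ t, s0 < t → t ≤ L → F t + L = F L + t) := by
  have hP : ∃ t, t = L ∨ F t ≤ F (t + 1) := ⟨L, Or.inl rfl⟩
  classical
  set s0 := Nat.find hP with hs0
  have hPs0 := Nat.find_spec hP
  have hs0le : s0 ≤ L := by
    rcases hPs0 with h | h
    · omega
    · exact Nat.find_le (Or.inl rfl)
  have hdec : ∀ t < s0, F t = F (t + 1) + 1 := by
    intro t ht
    have := Nat.find_min hP ht
    push_neg at this
    have h2 := hdown t (by omega)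
    omega
  have hfirst : ∀ t ≤ s0, F t + t = F 0 := by
    intro t ht
    induction t with
    | zero => rfl
    | succ n ihn =>
      have h1 := hdec n (by omega)
      have h2 := ihn (by omega)
      omega
  refine ⟨s0, hs0le, hfirst, ?_⟩
  rcases eq_or_lt_of_le hs0le with h | hs0lt
  · intro t h1 h2; omega
  have hflat : F s0 ≤ F (s0 + 1) := by
    rcases hPs0 with h | h
    · omega
    · exact h
  -- ascending with slope exactly one after s0+1
  have hasc : ∀ u, s0 + 1 + u ≤ L →
      F (s0 + u) ≤ F (s0 + u + 1) ∧ F (s0 + 1 + u) = F (s0 + 1) + u := by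
    intro u
    induction u with
    | zero => intro _; exact ⟨by simpa using hflat, rfl⟩
    | succ n ihn =>
      intro hn
      obtain ⟨hmon, ih⟩ := ihn (by omega)
      have hstep := hX (s0 + n) (by omega) hmon
      have h2 := hup (s0 + n + 1) (by omega)
      have e : s0 + 1 + (n + 1) = s0 + n + 1 + 1 := by omega
      have e' : s0 + 1 + n = s0 + n + 1 := by omega
      rw [e'] at ih
      rw [e]
      have q1 : F (s0 + n + 1 + 1) = F (s0 + n + 2) := rfl
      constructor
      · have e'' : s0 + (n + 1) = s0 + n + 1 := by omega
        rw [e'']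
        omega
      · omega
  intro t h1 h2
  obtain ⟨u, rfl⟩ : ∃ u, t = s0 + 1 + u := ⟨t - s0 - 1, by omega⟩
  obtain ⟨w, hw⟩ : ∃ w, L = s0 + 1 + w := ⟨L - s0 - 1, by omega⟩
  have e1 := (hasc u (by omega)).2
  have e2 := (hasc w (by omega)).2
  rw [hw]
  omega

lemma exists_subwalk (p : G.Walk u v) :
    ∀ n i, i + n ≤ p.length → ∃ q : G.Walk (p.getVert i) (p.getVert (i + n)), q.length = n := by
  intro n
  induction n with
  | zero => intro i _; exact ⟨Walk.nil, rfl⟩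
  | succ m ihm =>
    intro i hi
    have hadj : G.Adj (p.getVert i) (p.getVert (i + 1)) := p.adj_getVert_succ (by omega)
    obtain ⟨q, hq⟩ := ihm (i + 1) (by omega)
    have e : i + (m + 1) = i + 1 + m := by omega
    rw [e]
    exact ⟨Walk.cons hadj q, by simp [hq]⟩

lemma getVert_dist (hG : G.Connected) (p : G.Walk u v) (hp : p.length = G.dist u v)
    {i j : ℕ} (hij : i ≤ j) (hj : j ≤ p.length) :
    G.dist (p.getVert i) (p.getVert j) = j - i := by
  obtain ⟨q, hq⟩ := exists_subwalk p (j - i) i (by omega)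
  have e : i + (j - i) = j := by omega
  have hle : G.dist (p.getVert i) (p.getVert (i + (j - i))) ≤ j - i := le_trans (dist_le q) (le_of_eq hq)
  rw [e] at hle
  obtain ⟨q0, hq0⟩ := exists_subwalk p i 0 (by omega)
  obtain ⟨q1, hq1⟩ := exists_subwalk p (p.length - j) j (by omega)
  have e0 : (0 : ℕ) + i = i := by omega
  have e1 : j + (p.length - j) = p.length := by omega
  have d0 : G.dist (p.getVert 0) (p.getVert (0 + i)) ≤ i := le_trans (dist_le q0) (le_of_eq hq0)
  have d1 : G.dist (p.getVert j) (p.getVert (j + (p.length - j))) ≤ p.length - j :=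
    le_trans (dist_le q1) (le_of_eq hq1)
  rw [e0, p.getVert_zero] at d0
  rw [e1, p.getVert_length] at d1
  have t1 : G.dist u v ≤ G.dist u (p.getVert i) + G.dist (p.getVert i) v := hG.dist_triangle
  have t2 : G.dist (p.getVert i) v ≤ G.dist (p.getVert i) (p.getVert j) + G.dist (p.getVert j) v :=
    hG.dist_triangle
  omega

lemma isPath_append {u v w : V} {p : G.Walk u v} {q : G.Walk v w}
    (hp : p.IsPath) (hq : q.IsPath)
    (hdisj : ∀ x, x ∈ p.support → x ∈ q.support → x = v) : (p.append q).IsPath := by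
  rw [Walk.isPath_def, Walk.support_append, List.nodup_append]
  refine ⟨hp.support_nodup, hq.support_nodup.tail, ?_⟩
  intro x hxp b hxq hxb
  subst hxb
  have hxq' : x ∈ q.support := List.mem_of_mem_tail hxq
  have hxv : x = v := hdisj x hxp hxq'
  have hvt : v ∉ q.support.tail := by
    have hnd := hq.support_nodup
    rw [q.support_eq_cons] at hnd
    exact (List.nodup_cons.mp hnd).1
  exact hvt (hxv ▸ hxq)

lemma key_X (hG : G.Connected)
    (hblock : ∀ (u : V) (p : G.Walk u u), p.IsCycle → G.IsClique {v | v ∈ p.support})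
    {R : Set V} (hcl : G.IsClique R) (hR : R.Nonempty) {a b c : V}
    (hab : G.Adj a b) (hbc : G.Adj b c) (hac : G.dist a c = 2)
    (h1 : sdist G R a ≤ sdist G R b) (h2 : sdist G R c ≤ sdist G R b) : False := by
  classical
  have hanec : a ≠ c := by rintro rfl; rw [dist_self] at hac; omega
  have hnadj : ¬ G.Adj a c := fun h => by rw [adj_dist_one hG h] at hac; omega
  obtain ⟨ra, hra, hdA⟩ := sdist_exists (G := G) hR a
  obtain ⟨rc, hrc, hdC⟩ := sdist_exists (G := G) hR c
  by_cases hfb : sdist G R b = 0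
  · have hda0 : G.dist a ra = 0 := by omega
    have hdc0 : G.dist c rc = 0 := by omega
    have ha : a = ra := (hG.dist_eq_zero_iff).mp hda0
    have hc : c = rc := (hG.dist_eq_zero_iff).mp hdc0
    exact hnadj (by rw [ha, hc]; exact hcl hra hrc (by rw [← ha, ← hc]; exact hanec))
  · obtain ⟨A0, hA0len⟩ := hG.exists_walk_length_eq_dist a ra
    have hApath : A0.IsPath := A0.isPath_of_length_eq_dist hA0len
    obtain ⟨C0, hC0len⟩ := hG.exists_walk_length_eq_dist c rc
    have hCpath : C0.IsPath := C0.isPath_of_length_eq_dist hC0len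
    have hbA : b ∉ A0.support := by
      intro hb
      have hsplit := geodesic_split hG A0 hA0len hb
      have h3 : sdist G R b ≤ G.dist b ra := sdist_le hra
      have h4 : G.dist a b = 1 := adj_dist_one hG hab
      omega
    have hbC : b ∉ C0.support := by
      intro hb
      have hsplit := geodesic_split hG C0 hC0len hb
      have h3 : sdist G R b ≤ G.dist b rc := sdist_le hrc
      have h4 : G.dist c b = 1 := adj_dist_one hG hbc.symm
      omega
    obtain ⟨c', C1, C2, hCeq, hc'S, hmeet⟩ :=
      exists_prefix_meet C0 {v | v ∈ A0.support ∨ v ∈ R} (Or.inr hrc)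
    have hC1sub : C1.support ⊆ C0.support := by
      rw [← hCeq]; exact Walk.subset_support_append_left _ _
    have hC1path : C1.IsPath := by
      have : (C1.append C2).IsPath := by rw [hCeq]; exact hCpath
      exact this.of_append_left
    have hbC1 : b ∉ C1.support := fun h => hbC (hC1sub h)
    have hcC1 : c ∈ C1.support := C1.start_mem_support
    have hc'C1 : c' ∈ C1.support := C1.end_mem_support
    have hT : (Walk.cons hbc.symm Walk.nil : G.Walk c b).IsPath := by
      simp [Walk.isPath_def, hbc.ne']
    set Q : G.Walk c' b := C1.reverse.append (Walk.cons hbc.symm Walk.nil) with hQdef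
    have hQsupp : ∀ x, x ∈ Q.support → x ∈ C1.support ∨ x = b := by
      intro x hx
      rcases (Walk.mem_support_append_iff _ _).mp hx with h | h
      · left; rw [Walk.support_reverse] at h; exact List.mem_reverse.mp h
      · rcases (by simpa using h : x = c ∨ x = b) with hh | hh
        · left; rw [hh]; exact hcC1
        · right; exact hh
    have hQpath : Q.IsPath := by
      refine isPath_append (by rw [Walk.isPath_reverse_iff]; exact hC1path) hT ?_
      intro x hx hxT
      rw [Walk.support_reverse, List.mem_reverse] at hx
      rcases (by simpa using hxT : x = c ∨ x = b) with hh | hh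
      · exact hh
      · exact absurd (hh ▸ hx) hbC1
    have hcQ : c ∈ Q.support := by
      apply (Walk.mem_support_append_iff _ _).mpr
      right; exact Walk.start_mem_support _
    have hQedge : s(b, a) ∉ Q.edges := by
      intro h
      rw [hQdef, Walk.edges_append] at h
      rcases List.mem_append.mp h with h' | h'
      · rw [Walk.edges_reverse, List.mem_reverse] at h'
        exact hbC1 (Walk.fst_mem_support_of_mem_edges C1 h')
      · have h2' : s(b, a) = s(c, b) := by simpa using h'
        rw [Sym2.eq_iff] at h2'
        rcases h2' with ⟨e1, _⟩ | ⟨_, e2⟩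
        · exact hbc.ne e1
        · exact hanec e2
    by_cases hc'A : c' ∈ A0.support
    · set A1 := A0.takeUntil c' hc'A with hA1def
      have hA1path : A1.IsPath := hApath.takeUntil _
      have hA1sub : A1.support ⊆ A0.support := Walk.support_takeUntil_subset _ _
      have hinner : (A1.append Q).IsPath := by
        apply isPath_append hA1path hQpath
        intro x hxA hxQ
        rcases hQsupp x hxQ with h | h
        · by_contra hne
          exact (hmeet x h hne) (Or.inl (hA1sub hxA))
        · exact absurd (h ▸ hxA) (fun hh => hbA (hA1sub hh))
      have hedge : ¬ s(b, a) ∈ (A1.append Q).edges := by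
        intro he
        rw [Walk.edges_append] at he
        rcases List.mem_append.mp he with h | h
        · exact hbA (hA1sub (Walk.fst_mem_support_of_mem_edges A1 h))
        · exact hQedge h
      have hcyc : (Walk.cons hab.symm (A1.append Q)).IsCycle :=
        (Walk.cons_isCycle_iff _ hab.symm).mpr ⟨hinner, hedge⟩
      have hcli := hblock b _ hcyc
      have haW : a ∈ (Walk.cons hab.symm (A1.append Q)).support := by
        rw [Walk.support_cons]
        exact List.mem_cons_of_mem _ (Walk.start_mem_support _)
      have hcW : c ∈ (Walk.cons hab.symm (A1.append Q)).support := by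
        rw [Walk.support_cons]
        exact List.mem_cons_of_mem _ ((Walk.mem_support_append_iff _ _).mpr (Or.inr hcQ))
      exact hnadj (hcli haW hcW hanec)
    · have hc'R : c' ∈ R := hc'S.resolve_left hc'A
      have hraA : ra ∈ A0.support := Walk.end_mem_support _
      have hnerc : ra ≠ c' := fun h => hc'A (h ▸ hraA)
      have hadjrc : G.Adj ra c' := hcl hra hc'R hnerc
      have hconsQ : (Walk.cons hadjrc Q).IsPath := by
        rw [Walk.cons_isPath_iff]
        refine ⟨hQpath, ?_⟩
        intro hraQ
        rcases hQsupp ra hraQ with h | h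
        · by_cases hh : ra = c'
          · exact hnerc hh
          · exact (hmeet ra h hh) (Or.inr hra)
        · exact hbA (h ▸ hraA)
      have hinner : (A0.append (Walk.cons hadjrc Q)).IsPath := by
        apply isPath_append hApath hconsQ
        intro x hxA hxQ
        rw [Walk.support_cons] at hxQ
        rcases List.mem_cons.mp hxQ with h | h
        · exact h
        · rcases hQsupp x h with h' | h'
          · by_cases hh : x = c'
            · exact absurd (hh ▸ hxA) hc'A
            · exact absurd (Or.inl hxA) (hmeet x h' hh)
          · exact absurd (h' ▸ hxA) hbA
      have hedge : ¬ s(b, a) ∈ (A0.append (Walk.cons hadjrc Q)).edges := by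
        intro he
        rw [Walk.edges_append, Walk.edges_cons] at he
        rcases List.mem_append.mp he with h | h
        · exact hbA (Walk.fst_mem_support_of_mem_edges A0 h)
        · rcases List.mem_cons.mp h with h' | h'
          · rw [Sym2.eq_iff] at h'
            rcases h' with ⟨e1, _⟩ | ⟨e1, _⟩
            · exact hbA (e1 ▸ hraA)
            · exact hbC (hC1sub (e1 ▸ hc'C1))
          · exact hQedge h'
      have hcyc : (Walk.cons hab.symm (A0.append (Walk.cons hadjrc Q))).IsCycle :=
        (Walk.cons_isCycle_iff _ hab.symm).mpr ⟨hinner, hedge⟩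
      have hcli := hblock b _ hcyc
      have haW : a ∈ (Walk.cons hab.symm (A0.append (Walk.cons hadjrc Q))).support := by
        rw [Walk.support_cons]
        exact List.mem_cons_of_mem _ (Walk.start_mem_support _)
      have hcW : c ∈ (Walk.cons hab.symm (A0.append (Walk.cons hadjrc Q))).support := by
        rw [Walk.support_cons]
        apply List.mem_cons_of_mem
        apply (Walk.mem_support_append_iff _ _).mpr
        right
        rw [Walk.support_cons]
        exact List.mem_cons_of_mem _ hcQ
      exact hnadj (hcli haW hcW hanec)

lemma key_K1 (hG : G.Connected)
    (hblock : ∀ (u : V) (p : G.Walk u u), p.IsCycle → G.IsClique {v | v ∈ p.support})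
    {x m m' : V} (hmm : G.Adj m m') {j : ℕ}
    (hjm : G.dist x m = j) (hjm' : G.dist x m' = j) (hj : 1 ≤ j) :
    ∃ w, G.Adj w m ∧ G.Adj w m' ∧ G.dist x w + 1 = j := by
  classical
  obtain ⟨A, hAlen⟩ := hG.exists_walk_length_eq_dist x m
  have hApath := A.isPath_of_length_eq_dist hAlen
  obtain ⟨B, hBlen⟩ := hG.exists_walk_length_eq_dist x m'
  have hBpath := B.isPath_of_length_eq_dist hBlen
  have hd1 : G.dist m m' = 1 := adj_dist_one hG hmm
  have hd1' : G.dist m' m = 1 := adj_dist_one hG hmm.symm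
  have hm'A : m' ∉ A.support := by
    intro h
    have hs := geodesic_split hG A hAlen h
    omega
  have hmB : m ∉ B.support := by
    intro h
    have hs := geodesic_split hG B hBlen h
    omega
  have hxA : x ∈ A.support := A.start_mem_support
  obtain ⟨c', P1, P2, hPeq, hc'A, hmeet⟩ :=
    exists_prefix_meet B.reverse {v | v ∈ A.support} hxA
  have hc'A' : c' ∈ A.support := hc'A
  have hP1sub : P1.support ⊆ B.support := by
    intro y hy
    have h1 : y ∈ B.reverse.support := by
      rw [← hPeq]; exact Walk.subset_support_append_left _ _ hy
    rw [Walk.support_reverse, List.mem_reverse] at h1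
    exact h1
  have hP1path : P1.IsPath := by
    have : (P1.append P2).IsPath := by rw [hPeq]; exact hBpath.reverse
    exact this.of_append_left
  have hc'B : c' ∈ B.support := hP1sub (Walk.end_mem_support _)
  have hc'nem : c' ≠ m := fun h => hmB (h ▸ hc'B)
  have hc'nem' : c' ≠ m' := fun h => hm'A (h ▸ hc'A')
  set A2 := A.dropUntil c' hc'A' with hA2def
  have hA2path : A2.IsPath := hApath.dropUntil _
  have hA2sub : A2.support ⊆ A.support := Walk.support_dropUntil_subset _ _
  have hmP1 : m ∉ P1.support := fun h => hmB (hP1sub h)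
  have hm'A2 : m' ∉ A2.support := fun h => hm'A (hA2sub h)
  have hinner : (A2.reverse.append P1.reverse).IsPath := by
    apply isPath_append hA2path.reverse hP1path.reverse
    intro y hyA hyP
    rw [Walk.support_reverse, List.mem_reverse] at hyA hyP
    by_contra hne
    exact (hmeet y hyP hne) (hA2sub hyA)
  have hedge : ¬ s(m', m) ∈ (A2.reverse.append P1.reverse).edges := by
    intro he
    rw [Walk.edges_append] at he
    rcases List.mem_append.mp he with h | h
    · rw [Walk.edges_reverse, List.mem_reverse] at h
      exact hm'A2 (Walk.fst_mem_support_of_mem_edges A2 h)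
    · rw [Walk.edges_reverse, List.mem_reverse] at h
      exact hmP1 (Walk.snd_mem_support_of_mem_edges P1 h)
  have hcyc : (Walk.cons hmm.symm (A2.reverse.append P1.reverse)).IsCycle :=
    (Walk.cons_isCycle_iff _ hmm.symm).mpr ⟨hinner, hedge⟩
  have hcli := hblock m' _ hcyc
  have hmW : m ∈ (Walk.cons hmm.symm (A2.reverse.append P1.reverse)).support := by
    rw [Walk.support_cons]
    exact List.mem_cons_of_mem _ (Walk.start_mem_support _)
  have hm'W : m' ∈ (Walk.cons hmm.symm (A2.reverse.append P1.reverse)).support := by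
    rw [Walk.support_cons]; exact List.mem_cons_self
  have hc'W : c' ∈ (Walk.cons hmm.symm (A2.reverse.append P1.reverse)).support := by
    rw [Walk.support_cons]
    apply List.mem_cons_of_mem
    apply (Walk.mem_support_append_iff _ _).mpr
    left
    rw [Walk.support_reverse, List.mem_reverse]
    exact Walk.start_mem_support _
  have hadj1 : G.Adj c' m := hcli hc'W hmW hc'nem
  have hadj2 : G.Adj c' m' := hcli hc'W hm'W hc'nem'
  refine ⟨c', hadj1, hadj2, ?_⟩
  have hs := geodesic_split hG A hAlen hc'A'
  have : G.dist c' m = 1 := adj_dist_one hG hadj1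
  omega

lemma no_three (hG : G.Connected)
    (hblock : ∀ (u : V) (p : G.Walk u u), p.IsCycle → G.IsClique {v | v ∈ p.support})
    {R : Set V} (hcl : G.IsClique R) (hR : R.Nonempty) {u v : V}
    (p : G.Walk u v) (hlen : p.length = G.dist u v) {x y z : V}
    (hx : x ∈ p.support) (hy : y ∈ p.support) (hz : z ∈ p.support)
    (hfxy : sdist G R x = sdist G R y) (hfyz : sdist G R y = sdist G R z) :
    x = y ∨ y = z ∨ x = z := by
  classical
  obtain ⟨i, hxi, hiL⟩ := (Walk.mem_support_iff_exists_getVert).mp hx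
  obtain ⟨j, hyj, hjL⟩ := (Walk.mem_support_iff_exists_getVert).mp hy
  obtain ⟨k, hzk, hkL⟩ := (Walk.mem_support_iff_exists_getVert).mp hz
  set L := p.length with hL
  set F : ℕ → ℕ := fun t => sdist G R (p.getVert t) with hF
  have hadj : ∀ t, t < L → G.Adj (p.getVert t) (p.getVert (t + 1)) :=
    fun t ht => p.adj_getVert_succ ht
  have hdown : ∀ t, t < L → F t ≤ F (t + 1) + 1 :=
    fun t ht => sdist_lip hG hR (hadj t ht)
  have hup : ∀ t, t < L → F (t + 1) ≤ F t + 1 :=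
    fun t ht => sdist_lip hG hR (hadj t ht).symm
  have hX : ∀ t, t + 2 ≤ L → F t ≤ F (t + 1) → F (t + 1) + 1 ≤ F (t + 2) := by
    intro t ht hle
    by_contra hcon
    push_neg at hcon
    have hd : G.dist (p.getVert t) (p.getVert (t + 2)) = 2 := by
      have hd' := getVert_dist hG p hlen (show t ≤ t + 2 by omega) (by omega)
      rw [show t + 2 - t = 2 from by omega] at hd'
      exact hd'
    have e1 : sdist G R (p.getVert (t + 1 + 1)) = F (t + 2) := rfl
    have e2 : sdist G R (p.getVert (t + 1)) = F (t + 1) := rfl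
    exact key_X hG hblock hcl hR (hadj t (by omega)) (hadj (t + 1) (by omega)) hd hle
      (by rw [e1, e2]; omega)
  obtain ⟨s0, hs0L, hfirst, hsecond⟩ := shape F L hdown hup hX
  have hFi : F i = sdist G R x := by rw [hF]; simp only []; rw [hxi]
  have hFj : F j = sdist G R y := by rw [hF]; simp only []; rw [hyj]
  have hFk : F k = sdist G R z := by rw [hF]; simp only []; rw [hzk]
  have key : ∀ a b : ℕ, a ≤ L → b ≤ L → F a = F b →
      a = b ∨ (a ≤ s0 ∧ s0 < b) ∨ (b ≤ s0 ∧ s0 < a) := by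
    intro a b ha hb hFab
    by_cases h1 : a ≤ s0 <;> by_cases h2 : b ≤ s0
    · have e1 := hfirst a h1
      have e2 := hfirst b h2
      left; omega
    · right; left; exact ⟨h1, by omega⟩
    · right; right; exact ⟨h2, by omega⟩
    · have e1 := hsecond a (by omega) ha
      have e2 := hsecond b (by omega) hb
      left; omega
  have kij := key i j hiL hjL (by rw [hFi, hFj, hfxy])
  have kjk := key j k hjL hkL (by rw [hFj, hFk, hfyz])
  have kik := key i k hiL hkL (by rw [hFi, hFk, hfxy, hfyz])
  rcases kij with hij | hij
  · left; rw [← hxi, ← hyj, hij]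
  rcases kjk with hjk | hjk
  · right; left; rw [← hyj, ← hzk, hjk]
  rcases kik with hik | hik
  · right; right; rw [← hxi, ← hzk, hik]
  omega

lemma sdist_singleton (w y : V) : sdist G {y} w = G.dist w y := by
  obtain ⟨r, hr, hd⟩ := sdist_exists (G := G) (R := {y}) ⟨y, rfl⟩ w
  rw [Set.mem_singleton_iff] at hr
  rw [← hd, hr]

lemma exists_center [Fintype V] (hG : G.Connected)
    (hblock : ∀ (u : V) (p : G.Walk u u), p.IsCycle → G.IsClique {v | v ∈ p.support}) :
    ∃ R : Set V, G.IsClique R ∧ R.Nonempty ∧ ∀ x, sdist G R x ≤ G.diam / 2 := by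
  classical
  haveI : Nonempty V := hG.nonempty
  have hnetop : G.ediam ≠ ⊤ := by
    obtain ⟨u0, v0, h⟩ := exists_edist_eq_ediam_of_finite (G := G)
    rw [← h]
    exact edist_ne_top_iff_reachable.mpr (hG.preconnected u0 v0)
  obtain ⟨u, v, huv⟩ := exists_dist_eq_diam (G := G)
  obtain ⟨P, hPlen0⟩ := hG.exists_walk_length_eq_dist u v
  set d := G.diam with hd
  have hPlen : P.length = G.dist u v := hPlen0
  have hPd : P.length = d := by rw [hPlen, huv]
  set k := d / 2 with hk
  -- the distance profile of any vertex x along P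
  have main : ∀ x : V,
      ∃ s0 ≤ P.length, (∀ t ≤ s0, G.dist x (P.getVert t) + t = G.dist x u) ∧
        (∀ t, s0 < t → t ≤ P.length →
          G.dist x (P.getVert t) + P.length = G.dist x v + t) := by
    intro x
    have hsd : ∀ w, sdist G {x} w = G.dist x w := fun w => by
      rw [sdist_singleton, dist_comm]
    have hadj : ∀ t, t < P.length → G.Adj (P.getVert t) (P.getVert (t + 1)) :=
      fun t ht => P.adj_getVert_succ ht
    have hdown : ∀ t, t < P.length →
        G.dist x (P.getVert t) ≤ G.dist x (P.getVert (t + 1)) + 1 := by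
      intro t ht
      have h1 : G.dist x (P.getVert t) ≤
          G.dist x (P.getVert (t + 1)) + G.dist (P.getVert (t + 1)) (P.getVert t) :=
        hG.dist_triangle
      have h2 : G.dist (P.getVert (t + 1)) (P.getVert t) = 1 := adj_dist_one hG (hadj t ht).symm
      omega
    have hup : ∀ t, t < P.length →
        G.dist x (P.getVert (t + 1)) ≤ G.dist x (P.getVert t) + 1 := by
      intro t ht
      have h1 : G.dist x (P.getVert (t + 1)) ≤
          G.dist x (P.getVert t) + G.dist (P.getVert t) (P.getVert (t + 1)) :=
        hG.dist_triangle
      have h2 : G.dist (P.getVert t) (P.getVert (t + 1)) = 1 := adj_dist_one hG (hadj t ht)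
      omega
    have hX : ∀ t, t + 2 ≤ P.length → G.dist x (P.getVert t) ≤ G.dist x (P.getVert (t + 1)) →
        G.dist x (P.getVert (t + 1)) + 1 ≤ G.dist x (P.getVert (t + 2)) := by
      intro t ht hle
      by_contra hcon
      push_neg at hcon
      have hdist2 : G.dist (P.getVert t) (P.getVert (t + 2)) = 2 := by
        have hd' := getVert_dist hG P hPlen (show t ≤ t + 2 by omega) (by omega)
        rw [show t + 2 - t = 2 from by omega] at hd'
        exact hd'
      have hcli : G.IsClique {x} := by
        simp [SimpleGraph.isClique_iff, Set.pairwise_singleton]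
      apply key_X hG hblock hcli ⟨x, rfl⟩ (hadj t (by omega)) (hadj (t + 1) (by omega)) hdist2
      · rw [hsd, hsd]; exact hle
      · rw [hsd, hsd]
        have e : t + 1 + 1 = t + 2 := rfl
        rw [e]; omega
    obtain ⟨s0, hs0L, hfirst, hsecond⟩ :=
      shape (fun t => G.dist x (P.getVert t)) P.length hdown hup hX
    refine ⟨s0, hs0L, ?_, ?_⟩
    · intro t ht
      have := hfirst t ht
      rwa [P.getVert_zero] at this
    · intro t h1 h2
      have := hsecond t h1 h2
      rwa [P.getVert_length] at this
  have hxu : ∀ x : V, G.dist x u ≤ d := fun x => dist_le_diam hnetop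
  have hxv : ∀ x : V, G.dist x v ≤ d := fun x => dist_le_diam hnetop
  by_cases hpar : d % 2 = 0
  · -- even diameter: centre vertex
    refine ⟨{P.getVert k}, by simp [SimpleGraph.isClique_iff, Set.pairwise_singleton],
      ⟨_, rfl⟩, ?_⟩
    intro x
    obtain ⟨s0, hs0L, hfirst, hsecond⟩ := main x
    have hsle : sdist G {P.getVert k} x ≤ G.dist x (P.getVert k) := sdist_le rfl
    by_cases hks : k ≤ s0
    · have := hfirst k hks
      have := hxu x
      omega
    · have := hsecond k (by omega) (by omega)
      have := hxv x
      omega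
  · -- odd diameter
    have hd1 : 1 ≤ d := by omega
    have hkd : k + 1 ≤ d := by omega
    have hmadj : G.Adj (P.getVert k) (P.getVert (k + 1)) := P.adj_getVert_succ (by omega)
    set m := P.getVert k with hm
    set m' := P.getVert (k + 1) with hm'
    set R : Set V := {w | w = m ∨ w = m' ∨ (G.Adj w m ∧ G.Adj w m')} with hR
    have hcommon : ∀ w1 w2, w1 ≠ w2 → G.Adj w1 m → G.Adj w1 m' → G.Adj w2 m →
        G.Adj w2 m' → G.Adj w1 w2 := by
      intro w1 w2 hne h1m h1m' h2m h2m'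
      have hpath : (Walk.cons h2m.symm (Walk.cons h2m' (Walk.cons h1m'.symm Walk.nil))
          : G.Walk m w1).IsPath := by
        rw [Walk.isPath_def]
        show List.Nodup [m, w2, m', w1]
        simp [h2m.ne', hmadj.ne, h1m.ne', h2m'.ne, h1m'.ne', hne.symm]
      have hedge : s(w1, m) ∉ (Walk.cons h2m.symm (Walk.cons h2m' (Walk.cons h1m'.symm Walk.nil))
          : G.Walk m w1).edges := by
        intro he
        simp only [Walk.edges_cons, Walk.edges_nil, List.mem_cons, List.not_mem_nil,
          or_false] at he
        rcases he with h | h | h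
        · rw [Sym2.eq_iff] at h
          rcases h with ⟨e1, e2⟩ | ⟨e1, e2⟩
          · exact h1m.ne e1
          · exact hne e1
        · rw [Sym2.eq_iff] at h
          rcases h with ⟨e1, e2⟩ | ⟨e1, e2⟩
          · exact hne e1
          · exact h1m'.ne e1
        · rw [Sym2.eq_iff] at h
          rcases h with ⟨e1, e2⟩ | ⟨e1, e2⟩
          · exact h1m'.ne e1
          · exact hmadj.ne e2
      have hcyc : (Walk.cons h1m (Walk.cons h2m.symm (Walk.cons h2m'
          (Walk.cons h1m'.symm Walk.nil)))).IsCycle :=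
        (Walk.cons_isCycle_iff _ h1m).mpr ⟨hpath, hedge⟩
      have hcli := hblock w1 _ hcyc
      apply hcli _ _ hne
      · show w1 ∈ _
        rw [Walk.support_cons]
        exact List.mem_cons_self
      · show w2 ∈ _
        simp [Walk.support_cons]
    have hclique : G.IsClique R := by
      intro s hs t ht hst
      rcases hs with hs | hs | hs <;> rcases ht with ht | ht | ht
      · exact absurd (hs.trans ht.symm) hst
      · rw [hs, ht]; exact hmadj
      · rw [hs]; exact ht.1.symm
      · rw [hs, ht]; exact hmadj.symm
      · exact absurd (hs.trans ht.symm) hst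
      · rw [hs]; exact ht.2.symm
      · rw [ht]; exact hs.1
      · rw [ht]; exact hs.2
      · exact (hcommon t s (fun h => hst h.symm) ht.1 ht.2 hs.1 hs.2).symm
    refine ⟨R, hclique, ⟨m, Or.inl rfl⟩, ?_⟩
    intro x
    obtain ⟨s0, hs0L, hfirst, hsecond⟩ := main x
    have hslem : sdist G R x ≤ G.dist x m := sdist_le (Or.inl rfl)
    have hslem' : sdist G R x ≤ G.dist x m' := sdist_le (Or.inr (Or.inl rfl))
    by_cases hks : k + 1 ≤ s0
    · have h5 := hfirst (k + 1) hks
      rw [← hm'] at h5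
      have := hxu x
      omega
    · by_cases hks2 : s0 < k
      · have h5 := hsecond k hks2 (by omega)
        rw [← hm] at h5
        have := hxv x
        omega
      · -- s0 = k
        have e1 := hfirst k (by omega)
        rw [← hm] at e1
        have e2 := hsecond (k + 1) (by omega) (by omega)
        rw [← hm'] at e2
        have hb1 : G.dist x m ≤ k + 1 := by have := hxu x; omega
        have hb2 : G.dist x m' ≤ k + 1 := by have := hxv x; omega
        by_cases hc1 : G.dist x m ≤ k
        · omega
        · by_cases hc2 : G.dist x m' ≤ k
          · omega
          · have hjm : G.dist x m = k + 1 := by omega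
            have hjm' : G.dist x m' = k + 1 := by omega
            obtain ⟨w, hw1, hw2, hwd⟩ := key_K1 hG hblock hmadj hjm hjm' (by omega)
            have : sdist G R x ≤ G.dist x w := sdist_le (Or.inr (Or.inr ⟨hw1, hw2⟩))
            omega

end GpAux

/-- For a connected block graph `G` (every cycle induces a clique),
`χ_gp(G) = ⌈(diam(G)+1)/2⌉`. -/
theorem gpChromatic_blockGraph {V : Type*} [Fintype V] (G : SimpleGraph V) (hG : G.Connected)
    (hblock : ∀ (u : V) (p : G.Walk u u), p.IsCycle → G.IsClique {v | v ∈ p.support}) :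
    gpChromatic G = (G.diam + 1 + 1) / 2 := by
  classical
  haveI : Nonempty V := hG.nonempty
  set d := G.diam with hd
  set n := d / 2 + 1 with hnn
  obtain ⟨R, hcl, hRne, hbound⟩ := GpAux.exists_center hG hblock
  have hmem : GpColorable G n := by
    refine ⟨fun v => ⟨GpAux.sdist G R v, by have := hbound v; omega⟩, ?_⟩
    intro i u v p hp hlen x y z hx hy hz hxs hys hzs
    have ex : GpAux.sdist G R x = (i : ℕ) := congrArg Fin.val hx
    have ey : GpAux.sdist G R y = (i : ℕ) := congrArg Fin.val hy
    have ez : GpAux.sdist G R z = (i : ℕ) := congrArg Fin.val hz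
    exact GpAux.no_three hG hblock hcl hRne p hlen hxs hys hzs (by rw [ex, ey])
      (by rw [ey, ez])
  have hlow : ∀ kk, GpColorable G kk → n ≤ kk := by
    rintro kk ⟨c, hc⟩
    obtain ⟨u, v, huv⟩ := exists_dist_eq_diam (G := G)
    obtain ⟨P, hPlen⟩ := hG.exists_walk_length_eq_dist u v
    have hPpath : P.IsPath := P.isPath_of_length_eq_dist hPlen
    have hPd : P.length = d := by rw [hPlen, huv]
    set s : Finset V := P.support.toFinset with hsdef
    have hcard : s.card = d + 1 := by
      rw [hsdef, List.toFinset_card_of_nodup hPpath.support_nodup, Walk.length_support, hPd]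
    have hfib : ∀ i : Fin kk, (s.filter (fun a => c a = i)).card ≤ 2 := by
      intro i
      by_contra hcon
      push_neg at hcon
      obtain ⟨t, hts, htc⟩ := Finset.exists_subset_card_eq (show 3 ≤ _ from hcon)
      obtain ⟨x, y, z, hxy, hxz, hyz, rfl⟩ := Finset.card_eq_three.mp htc
      have hx := hts (show x ∈ ({x, y, z} : Finset V) by simp)
      have hy := hts (show y ∈ ({x, y, z} : Finset V) by simp)
      have hz := hts (show z ∈ ({x, y, z} : Finset V) by simp)
      rw [Finset.mem_filter] at hx hy hz
      have hxs : x ∈ P.support := by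
        have := hx.1; rw [hsdef, List.mem_toFinset] at this; exact this
      have hys : y ∈ P.support := by
        have := hy.1; rw [hsdef, List.mem_toFinset] at this; exact this
      have hzs : z ∈ P.support := by
        have := hz.1; rw [hsdef, List.mem_toFinset] at this; exact this
      rcases hc i P hPpath hPlen x y z hx.2 hy.2 hz.2 hxs hys hzs with h | h | h
      · exact hxy h
      · exact hyz h
      · exact hxz h
    have hsum : s.card = ∑ i : Fin kk, (s.filter (fun a => c a = i)).card :=
      Finset.card_eq_sum_card_fiberwise (fun x _ => Finset.mem_univ (c x))
    have hle : ∑ i : Fin kk, (s.filter (fun a => c a = i)).card ≤ 2 * kk := by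
      calc ∑ i : Fin kk, (s.filter (fun a => c a = i)).card
          ≤ ∑ _i : Fin kk, 2 := Finset.sum_le_sum (fun i _ => hfib i)
        _ = 2 * kk := by simp [Finset.sum_const, Fintype.card_fin, mul_comm]
    omega
  have h1 : sInf {k | GpColorable G k} ≤ n := Nat.sInf_le hmem
  have h2 : n ≤ sInf {k | GpColorable G k} :=
    hlow _ (Nat.sInf_mem (⟨n, hmem⟩ : {k | GpColorable G k}.Nonempty))
  rw [gpChromatic]
  omega
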